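/- Let p, q be nonzero complex numbers. The 4×4 matrix R̂_II = [[1,0,0,0],[0,1-(pq)⁻¹,p⁻¹,0],[0,q⁻¹,0,0],[0,0,0,1]] satisfies the braid relation R̂₁₂ R̂₂₃ R̂₁₂ = R̂₂₃ R̂₁₂ R̂₂₃ as 8×8 matrices, where R̂₁₂ = R̂_II ⊗ I₂ and R̂₂₃ = I₂ ⊗ R̂_II. -/
import Mathlib


open Matrix Kronecker

/-- The type II braid matrix `R̂_II`, obtained from the type II R-matrix by the index flip
`R̂^{ij}_{kl} = R^{ji}_{kl}`; rows and columns are indexed by pairs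
(1,1),(1,2),(2,1),(2,2). -/
noncomputable def RhatII (p q : ℂ) : Matrix (Fin 2 × Fin 2) (Fin 2 × Fin 2) ℂ :=
  (!![1, 0, 0, 0;
      0, 1 - (p * q)⁻¹, p⁻¹, 0;
      0, q⁻¹, 0, 0;
      0, 0, 0, 1]).submatrix finProdFinEquiv finProdFinEquiv

/-- `R̂₁₂ = R̂ ⊗ I₂` as an 8×8 matrix (indices reassociated). -/
noncomputable def Rhat12 (R : Matrix (Fin 2 × Fin 2) (Fin 2 × Fin 2) ℂ) :
    Matrix (Fin 2 × Fin 2 × Fin 2) (Fin 2 × Fin 2 × Fin 2) ℂ :=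
  Matrix.reindex (Equiv.prodAssoc _ _ _) (Equiv.prodAssoc _ _ _)
    (R ⊗ₖ (1 : Matrix (Fin 2) (Fin 2) ℂ))

/-- `R̂₂₃ = I₂ ⊗ R̂` as an 8×8 matrix. -/
noncomputable def Rhat23 (R : Matrix (Fin 2 × Fin 2) (Fin 2 × Fin 2) ℂ) :
    Matrix (Fin 2 × Fin 2 × Fin 2) (Fin 2 × Fin 2 × Fin 2) ℂ :=
  (1 : Matrix (Fin 2) (Fin 2) ℂ) ⊗ₖ R

set_option maxHeartbeats 2000000 in
/-- The type II braid matrix satisfies the braid relation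
`R̂₁₂ R̂₂₃ R̂₁₂ = R̂₂₃ R̂₁₂ R̂₂₃`. -/
theorem typeII_braid (p q : ℂ) (hp : p ≠ 0) (hq : q ≠ 0) :
    Rhat12 (RhatII p q) * Rhat23 (RhatII p q) * Rhat12 (RhatII p q) =
      Rhat23 (RhatII p q) * Rhat12 (RhatII p q) * Rhat23 (RhatII p q) := by
  ext ⟨i, j, k⟩ ⟨l, m, n⟩
  fin_cases i <;> fin_cases j <;> fin_cases k <;> fin_cases l <;> fin_cases m <;> fin_cases n <;>
  (simp [Rhat12, Rhat23, RhatII, Matrix.mul_apply, Fintype.sum_prod_type, Fin.sum_univ_two,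
      Matrix.one_apply, finProdFinEquiv, Matrix.submatrix_apply, Matrix.vecHead, Matrix.vecTail]
    <;> ring_nf)
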